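/- Let g ≥ 2, let x, x_1, …, x_g be pairwise distinct complex numbers, let y, y_1, …, y_g be arbitrary complex numbers, and let 1 ≤ m ≤ g−1. Then ∑_{j=1}^g [χ_m(x_j; x_1,…,x_g) / F'(x_j)] · (y − y_j)/(x − x_j) = y · χ_m(x; x_1,…,x_g)/F(x) + ∑_{k=1}^g y_k · χ_m(x_k; x_1,…,x_{k−1}, x, x_{k+1},…,x_g) / ((x_k − x) F'(x_k)) − ∑_{k=1}^g y_k · χ_{m−1}(x_k; x_1,…,x_{k−1}, x_{k+1},…,x_g) / F'(x_k), where in the middle sum the k-th list variable x_k is replaced by x (so the elementary symmetric polynomials are taken in g variables), and in the last sum the elementary symmetric polynomials are taken in the g−1 variables with x_k omitted. -/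

import Mathlib

open Finset

/-- `χ_m(t; x_1, …, x_g) = ∑_{j=0}^m (-1)^j h_j(x_1,…,x_g) t^{m-j}`, where `h_j`
is the `j`-th elementary symmetric polynomial of the multiset of the `x_i`. -/
noncomputable def chi (m : ℕ) (t : ℂ) (s : Multiset ℂ) : ℂ :=
  ∑ j ∈ Finset.range (m + 1), (-1) ^ j * s.esymm j * t ^ (m - j)

section Aux

open Polynomial

lemma esymm_zero' (s : Multiset ℂ) : s.esymm 0 = 1 := by simp [Multiset.esymm]

noncomputable def chiPoly (m : ℕ) (s : Multiset ℂ) : ℂ[X] :=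
  ∑ j ∈ Finset.range (m + 1), C ((-1) ^ j * s.esymm j) * X ^ (m - j)

lemma chiPoly_eval (m : ℕ) (t : ℂ) (s : Multiset ℂ) :
    (chiPoly m s).eval t = chi m t s := by
  simp [chiPoly, chi, eval_finset_sum]

lemma chiPoly_degree_le (m : ℕ) (s : Multiset ℂ) :
    (chiPoly m s).degree ≤ m := by
  refine (degree_sum_le _ _).trans ?_
  rw [Finset.sup_le_iff]
  intro j hj
  exact (degree_C_mul_X_pow_le _ _).trans (by
    exact_mod_cast Nat.cast_le.mpr (Nat.sub_le m j))

lemma esymm_cons (a : ℂ) (t : Multiset ℂ) (j : ℕ) :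
    (a ::ₘ t).esymm (j + 1) = t.esymm (j + 1) + a * t.esymm j := by
  simp only [Multiset.esymm, Multiset.powersetCard_cons, Multiset.map_add, Multiset.sum_add,
    Multiset.map_map]
  congr 1
  simp only [Function.comp_def, Multiset.prod_cons]
  rw [Multiset.sum_map_mul_left]

lemma chi_cons_sub (m : ℕ) (hm : 1 ≤ m) (c a b : ℂ) (t : Multiset ℂ) :
    chi m c (a ::ₘ t) - chi m c (b ::ₘ t) = -((a - b) * chi (m - 1) c t) := by
  obtain ⟨n, rfl⟩ : ∃ n, m = n + 1 := ⟨m - 1, (Nat.succ_pred_eq_of_pos hm).symm⟩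
  simp only [chi, Nat.add_sub_cancel, ← Finset.sum_sub_distrib]
  rw [Finset.sum_range_succ' (fun j => ((-1:ℂ)^j * (a ::ₘ t).esymm j * c ^ (n+1-j)
      - (-1)^j * (b ::ₘ t).esymm j * c ^ (n+1-j)))]
  have key : ∀ i ∈ Finset.range (n + 1),
      ((-1:ℂ)^(i+1) * (a ::ₘ t).esymm (i+1) * c ^ (n+1-(i+1))
        - (-1)^(i+1) * (b ::ₘ t).esymm (i+1) * c ^ (n+1-(i+1)))
      = -((a - b) * ((-1)^i * t.esymm i * c ^ (n - i))) := by
    intro i hi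
    have h1 : n + 1 - (i + 1) = n - i := by omega
    rw [esymm_cons, esymm_cons, h1]
    ring
  rw [Finset.sum_congr rfl key]
  simp [esymm_zero', Finset.mul_sum]

lemma partial_fraction {g : ℕ} (x : Fin g → ℂ) (hx : Function.Injective x)
    (x0 : ℂ) (hx0 : ∀ i, x0 ≠ x i) (f : ℂ[X]) (hf : f.degree < g) :
    f.eval x0 / ∏ i, (x0 - x i)
      = ∑ j, f.eval (x j) / ((∏ l ∈ univ.erase j, (x j - x l)) * (x0 - x j)) := by
  have hinj : Set.InjOn x (univ : Finset (Fin g)) := fun a _ b _ h => hx h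
  have hdeg : f.degree < (univ : Finset (Fin g)).card := by
    simpa [Finset.card_fin] using hf
  have heval : f.eval x0
      = ∑ i, f.eval (x i) * ∏ l ∈ univ.erase i, ((x i - x l)⁻¹ * (x0 - x l)) := by
    conv_lhs => rw [Lagrange.eq_interpolate hinj hdeg]
    simp [Lagrange.interpolate_apply, Lagrange.basis, Lagrange.basisDivisor,
      eval_finset_sum, eval_prod]
  rw [heval, Finset.sum_div]
  refine Finset.sum_congr rfl fun i _ => ?_
  have hsub : ∀ l, l ≠ i → x i - x l ≠ 0 := fun l hl =>
    sub_ne_zero.mpr (fun h => hl (hx h.symm))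
  have hF : ∏ l ∈ univ.erase i, (x i - x l) ≠ 0 :=
    Finset.prod_ne_zero_iff.mpr fun l hl => hsub l (Finset.mem_erase.mp hl).1
  have hP2 : ∏ l ∈ univ.erase i, (x0 - x l) ≠ 0 :=
    Finset.prod_ne_zero_iff.mpr fun l _ => sub_ne_zero.mpr (hx0 l)
  have h0i : x0 - x i ≠ 0 := sub_ne_zero.mpr (hx0 i)
  rw [Finset.prod_mul_distrib, Finset.prod_inv_distrib,
    ← Finset.mul_prod_erase univ _ (Finset.mem_univ i)]
  field_simp

end Aux

/-- For pairwise distinct `x, x_1, …, x_g`, arbitrary `y, y_1, …, y_g` and `1 ≤ m ≤ g−1`: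
`∑_j χ_m(x_j; x₁,…,x_g)/F'(x_j) · (y−y_j)/(x−x_j)
  = y χ_m(x; x₁,…,x_g)/F(x)
    + ∑_k y_k χ_m(x_k; x₁,…,x_{k−1},x,x_{k+1},…,x_g)/((x_k−x) F'(x_k))
    − ∑_k y_k χ_{m−1}(x_k; x₁,…,x̌_k,…,x_g)/F'(x_k)`. -/
theorem chi_sum_difference_identity
    (g : ℕ) (hg : 2 ≤ g) (x0 : ℂ) (x : Fin g → ℂ)
    (hx : Function.Injective x) (hx0 : ∀ i, x0 ≠ x i)
    (y0 : ℂ) (y : Fin g → ℂ) (m : ℕ) (hm1 : 1 ≤ m) (hmg : m ≤ g - 1) :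
    ∑ j, chi m (x j) (Multiset.map x univ.val) / (∏ l ∈ univ.erase j, (x j - x l))
        * ((y0 - y j) / (x0 - x j)) =
      y0 * chi m x0 (Multiset.map x univ.val) / (∏ i, (x0 - x i))
        + ∑ k, y k * chi m (x k) (Multiset.map (Function.update x k x0) univ.val)
            / ((x k - x0) * ∏ l ∈ univ.erase k, (x k - x l))
        - ∑ k, y k * chi (m - 1) (x k) (Multiset.map x (univ.erase k).val)
            / (∏ l ∈ univ.erase k, (x k - x l)) := by
  set S : Multiset ℂ := Multiset.map x univ.val with hS
  have hmlt : (m : WithBot ℕ) < g := by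
    have : m < g := by omega
    exact_mod_cast this
  have hpf := partial_fraction x hx x0 hx0 (chiPoly m S)
    ((chiPoly_degree_le m S).trans_lt hmlt)
  simp only [chiPoly_eval] at hpf
  have hsub : ∀ k l : Fin g, l ≠ k → x k - x l ≠ 0 := fun k l hl =>
    sub_ne_zero.mpr (fun h => hl (hx h.symm))
  have hF : ∀ k : Fin g, ∏ l ∈ univ.erase k, (x k - x l) ≠ 0 := fun k =>
    Finset.prod_ne_zero_iff.mpr fun l hl => hsub k l (Finset.mem_erase.mp hl).1
  have h0 : ∀ k : Fin g, x0 - x k ≠ 0 := fun k => sub_ne_zero.mpr (hx0 k)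
  have hk0 : ∀ k : Fin g, x k - x0 ≠ 0 := fun k => sub_ne_zero.mpr fun h => hx0 k h.symm
  have hdec : ∀ k : Fin g, S = x k ::ₘ Multiset.map x ((univ.erase k).val) := by
    intro k
    rw [hS, Finset.erase_val, ← Multiset.map_cons, Multiset.cons_erase
      (Finset.mem_univ k : k ∈ (univ : Finset (Fin g)))]
  have hdec' : ∀ k : Fin g, Multiset.map (Function.update x k x0) univ.val
      = x0 ::ₘ Multiset.map x ((univ.erase k).val) := by
    intro k
    have h1 : (univ : Finset (Fin g)).val = k ::ₘ (univ.erase k).val := by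
      rw [Finset.erase_val, Multiset.cons_erase (Finset.mem_univ k : k ∈ (univ : Finset (Fin g)))]
    rw [h1, Multiset.map_cons, Function.update_self]
    congr 1
    apply Multiset.map_congr rfl
    intro l hl
    have hlk : l ≠ k := (Finset.mem_erase.mp (Finset.mem_def.mpr hl)).1
    exact Function.update_of_ne hlk x0 x
  have hsplit : ∑ j, chi m (x j) S / (∏ l ∈ univ.erase j, (x j - x l))
        * ((y0 - y j) / (x0 - x j))
      = y0 * ∑ j, chi m (x j) S / ((∏ l ∈ univ.erase j, (x j - x l)) * (x0 - x j))
        - ∑ j, y j * chi m (x j) S / ((∏ l ∈ univ.erase j, (x j - x l)) * (x0 - x j)) := by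
    rw [Finset.mul_sum, ← Finset.sum_sub_distrib]
    refine Finset.sum_congr rfl fun j _ => ?_
    field_simp
  rw [hsplit, ← hpf]
  have hterm : ∀ k : Fin g,
      y k * chi m (x k) (Multiset.map (Function.update x k x0) univ.val)
          / ((x k - x0) * ∏ l ∈ univ.erase k, (x k - x l))
        - y k * chi (m - 1) (x k) (Multiset.map x (univ.erase k).val)
          / (∏ l ∈ univ.erase k, (x k - x l))
      = - (y k * chi m (x k) S / ((∏ l ∈ univ.erase k, (x k - x l)) * (x0 - x k))) := by
    intro k
    set T := Multiset.map x ((univ.erase k).val)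
    have hd := chi_cons_sub m hm1 (x k) (x k) x0 T
    rw [← hdec k, ← hdec' k] at hd
    have hchi : chi m (x k) (Multiset.map (Function.update x k x0) univ.val)
        = chi m (x k) S + (x k - x0) * chi (m - 1) (x k) T := by
      linear_combination -hd
    rw [hchi]
    field_simp [hF k, hk0 k, h0 k]
    ring
  rw [add_sub_assoc, ← Finset.sum_sub_distrib,
    Finset.sum_congr rfl fun k _ => hterm k]
  rw [Finset.sum_neg_distrib, mul_div_assoc]
  ring
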